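/- arXiv:math/0211066 — 2 statements merged into one kernel-verified Lean document; each statement's English description precedes it below -/
import Mathlib

section
/- For every y ∈ ℝ^d and t > 0: W(y,t) ⊆ { y − t·∇f(p) : p ∈ D⁺u_0(y) ∩ (0,∞)^d }. Consequently, if D⁻u_0(y) is nonempty then W(y,t) contains at most one point. Moreover, for any s > 0, any x ∈ ℝ^d and any maximizer y ∈ I(x,s), the vector ∇g((x−y)/s) belongs to D⁻(u(·,s))(x); in particular D⁻(u(·,s))(x) is nonempty for every x when s > 0. -/
open Set Metric

noncomputable section

/-- `g(z) = c·(z₁⋯z_d)^{1/(d+1)}` (used only for `z ≥ 0`, where the product is `≥ 0`). -/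
def gfun (c : ℝ) (d : ℕ) (z : Fin d → ℝ) : ℝ := c * (∏ i, z i) ^ (((d : ℝ) + 1)⁻¹)

/-- The set of values over which the Hopf-Lax supremum is taken. -/
def hlSet (c : ℝ) (d : ℕ) (u0 : (Fin d → ℝ) → ℝ) (x : Fin d → ℝ) (t : ℝ) : Set ℝ :=
  (fun y => u0 y + t * gfun c d (t⁻¹ • (x - y))) '' {y | y ≤ x}

/-- The Hopf-Lax function `u(x,t)`, with `u(x,0) = u₀(x)`. -/
def hlu (c : ℝ) (d : ℕ) (u0 : (Fin d → ℝ) → ℝ) (x : Fin d → ℝ) (t : ℝ) : ℝ :=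
  if t = 0 then u0 x else sSup (hlSet c d u0 x t)

/-- The set `I(x,t)` of maximizers in the Hopf-Lax formula. -/
def hlI (c : ℝ) (d : ℕ) (u0 : (Fin d → ℝ) → ℝ) (x : Fin d → ℝ) (t : ℝ) :
    Set (Fin d → ℝ) :=
  {y | y ≤ x ∧ hlu c d u0 x t = u0 y + t * gfun c d (t⁻¹ • (x - y))}

/-- The forward set `W(y,t) = { x ≥ y : u(x,t) = u₀(y) + t g((x−y)/t) }`. -/
def hlW (c : ℝ) (d : ℕ) (u0 : (Fin d → ℝ) → ℝ) (y : Fin d → ℝ) (t : ℝ) :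
    Set (Fin d → ℝ) :=
  {x | y ≤ x ∧ hlu c d u0 x t = u0 y + t * gfun c d (t⁻¹ • (x - y))}

/-- The decay condition at `−∞`. -/
def DecayCond (d : ℕ) (u0 : (Fin d → ℝ) → ℝ) : Prop :=
  ∀ b : Fin d → ℝ, ∀ C : ℝ, ∃ M : ℝ, 0 < M ∧ ∀ y : Fin d → ℝ, y ≤ b → M ≤ ‖y‖ →
    u0 y ≤ -C * ‖y‖ ^ ((d : ℝ) / ((d : ℝ) + 1))

/-- The gradient of `g` at `z ∈ (0,∞)^d`: `(∇g(z))_i = (c/(d+1))·(z₁⋯z_d)^{1/(d+1)}/z_i`. -/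
def gradg (c : ℝ) (d : ℕ) (z : Fin d → ℝ) : Fin d → ℝ :=
  fun i => (c / ((d : ℝ) + 1)) * (∏ j, z j) ^ (((d : ℝ) + 1)⁻¹) / z i

/-- The gradient of the velocity `f(ρ) = κ (ρ₁⋯ρ_d)⁻¹` with `κ = (c/(d+1))^{d+1}`:
`(∇f(ρ))_i = −κ/((ρ₁⋯ρ_d) ρ_i)`. -/
def gradf (c : ℝ) (d : ℕ) (p : Fin d → ℝ) : Fin d → ℝ :=
  fun i => -((c / ((d : ℝ) + 1)) ^ (d + 1)) / ((∏ j, p j) * p i)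

/-- The subdifferential `D⁻v(x)`. -/
def subdiff (d : ℕ) (v : (Fin d → ℝ) → ℝ) (x : Fin d → ℝ) : Set (Fin d → ℝ) :=
  {q | ∀ ε > (0 : ℝ), ∃ δ > (0 : ℝ), ∀ y : Fin d → ℝ, ‖y - x‖ < δ →
    -(ε * ‖y - x‖) ≤ v y - v x - ∑ i, q i * (y i - x i)}

/-- The superdifferential `D⁺v(x)`. -/
def superdiff (d : ℕ) (v : (Fin d → ℝ) → ℝ) (x : Fin d → ℝ) : Set (Fin d → ℝ) :=
  {p | ∀ ε > (0 : ℝ), ∃ δ > (0 : ℝ), ∀ y : Fin d → ℝ, ‖y - x‖ < δ →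
    v y - v x - ∑ i, p i * (y i - x i) ≤ ε * ‖y - x‖}

set_option maxHeartbeats 1000000 in
lemma HLgfun_nonneg (c : ℝ) (hc : 0 ≤ c) (d : ℕ) (z : Fin d → ℝ) (hz : ∀ i, 0 ≤ z i) :
    0 ≤ gfun c d z :=
  mul_nonneg hc (Real.rpow_nonneg (Finset.prod_nonneg fun i _ => hz i) _)

lemma HLgfun_continuous (c : ℝ) (d : ℕ) : Continuous (gfun c d) := by
  have h1 : Continuous fun z : Fin d → ℝ => ∏ i, z i :=
    continuous_finset_prod _ fun i _ => continuous_apply i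
  have h2 : Continuous fun s : ℝ => s ^ (((d : ℝ) + 1)⁻¹) := by
    rw [continuous_iff_continuousAt]
    intro s
    exact Real.continuousAt_rpow_const s _ (Or.inr (by positivity))
  exact continuous_const.mul (h2.comp h1)

lemma HLgradg_pos (c : ℝ) (hc : 0 < c) (d : ℕ) (z : Fin d → ℝ) (hz : ∀ i, 0 < z i) (i : Fin d) :
    0 < gradg c d z i := by
  have hP : 0 < ∏ j, z j := Finset.prod_pos fun j _ => hz j
  have h1 : 0 < (∏ j, z j) ^ (((d:ℝ)+1)⁻¹) := Real.rpow_pos_of_pos hP _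
  have hd1 : (0:ℝ) < (d:ℝ) + 1 := by positivity
  have := hz i
  rw [gradg]
  positivity

lemma HLgradf_gradg (c : ℝ) (hc : 0 < c) (d : ℕ) (z : Fin d → ℝ) (hz : ∀ i, 0 < z i) :
    gradf c d (gradg c d z) = fun i => -(z i) := by
  have hP : 0 < ∏ i, z i := Finset.prod_pos fun i _ => hz i
  have hd1 : (0:ℝ) < (d:ℝ)+1 := by positivity
  have ha : (0:ℝ) < c / ((d:ℝ)+1) := by positivity
  have hPr : 0 < (∏ i, z i) ^ (((d:ℝ)+1)⁻¹) := Real.rpow_pos_of_pos hP _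
  funext i
  have hzi := (hz i).ne'
  have hprod : (∏ j, gradg c d z j)
      = (c/((d:ℝ)+1) * (∏ j, z j) ^ (((d:ℝ)+1)⁻¹))^d / ∏ j, z j := by
    simp only [gradg]
    rw [Finset.prod_div_distrib, Finset.prod_const, Finset.card_univ, Fintype.card_fin]
  have hkey : (c/((d:ℝ)+1) * (∏ j, z j) ^ (((d:ℝ)+1)⁻¹))^(d+1)
      = (c/((d:ℝ)+1))^(d+1) * ∏ j, z j := by
    rw [mul_pow, ← Real.rpow_natCast ((∏ j, z j) ^ (((d:ℝ)+1)⁻¹)) (d+1),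
      ← Real.rpow_mul hP.le]
    congr 1
    rw [show ((((d:ℕ)+1 : ℕ)):ℝ) = (d:ℝ)+1 by push_cast; ring,
      inv_mul_cancel₀ hd1.ne', Real.rpow_one]
  have hden : ((c/((d:ℝ)+1) * (∏ j, z j) ^ (((d:ℝ)+1)⁻¹))^d / ∏ j, z j) * gradg c d z i
      = (c/((d:ℝ)+1))^(d+1) / z i := by
    show ((c/((d:ℝ)+1) * (∏ j, z j) ^ (((d:ℝ)+1)⁻¹))^d / ∏ j, z j)
        * (c/((d:ℝ)+1) * (∏ j, z j) ^ (((d:ℝ)+1)⁻¹) / z i) = _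
    rw [div_mul_div_comm, ← pow_succ, hkey]
    rw [mul_comm ((c/((d:ℝ)+1))^(d+1)) (∏ j, z j), mul_div_mul_left _ _ hP.ne']
  rw [gradf, hprod, hden]
  have hA : ((c/((d:ℝ)+1))^(d+1) : ℝ) ≠ 0 := by positivity
  field_simp

def HLgderiv (c : ℝ) (d : ℕ) (z : Fin d → ℝ) : (Fin d → ℝ) →L[ℝ] ℝ :=
  c • ((((d:ℝ)+1)⁻¹ * (∏ i, z i) ^ ((((d:ℝ)+1)⁻¹) - 1)) •
    (∑ i, (∏ j ∈ Finset.univ.erase i, z j) •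
      ContinuousLinearMap.proj (R := ℝ) (φ := fun _ : Fin d => ℝ) i))

lemma HLgfun_hasFDerivAt (c : ℝ) (d : ℕ) (z : Fin d → ℝ) (hz : ∀ i, 0 < z i) :
    HasFDerivAt (gfun c d) (HLgderiv c d z) z := by
  have hP : 0 < ∏ i, z i := Finset.prod_pos fun i _ => hz i
  have h1 : HasFDerivAt (𝕜 := ℝ) (fun y : Fin d → ℝ => ∏ i, y i)
      (∑ i, (∏ j ∈ Finset.univ.erase i, z j) •
        ContinuousLinearMap.proj (R := ℝ) (φ := fun _ : Fin d => ℝ) i) z :=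
    hasFDerivAt_finset_prod
  have h2 : HasDerivAt (fun s : ℝ => s ^ (((d:ℝ)+1)⁻¹))
      ((((d:ℝ)+1)⁻¹) * (∏ i, z i) ^ ((((d:ℝ)+1)⁻¹) - 1)) (∏ i, z i) :=
    Real.hasDerivAt_rpow_const (Or.inl hP.ne')
  exact (h2.comp_hasFDerivAt z h1).const_mul c

lemma HLgfun_deriv_apply (c : ℝ) (d : ℕ) (z : Fin d → ℝ) (hz : ∀ i, 0 < z i) (v : Fin d → ℝ) :
    HLgderiv c d z v = ∑ i, gradg c d z i * v i := by
  have hP : 0 < ∏ i, z i := Finset.prod_pos fun i _ => hz i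
  have hd1 : (0:ℝ) < (d:ℝ) + 1 := by positivity
  simp only [HLgderiv, ContinuousLinearMap.smul_apply, ContinuousLinearMap.sum_apply,
    ContinuousLinearMap.proj_apply, smul_eq_mul, Finset.mul_sum]
  refine Finset.sum_congr rfl fun i _ => ?_
  have hzi := (hz i).ne'
  have herase : (∏ j ∈ Finset.univ.erase i, z j) = (∏ j, z j) / z i :=
    (eq_div_iff hzi).mpr (Finset.prod_erase_mul Finset.univ z (Finset.mem_univ i))
  have hpow : (∏ j, z j) ^ ((((d:ℝ)+1)⁻¹) - 1) = (∏ j, z j) ^ (((d:ℝ)+1)⁻¹) / (∏ j, z j) := by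
    rw [Real.rpow_sub hP, Real.rpow_one]
  rw [herase, hpow, gradg]
  field_simp

lemma HLgfun_epsdelta (c : ℝ) (d : ℕ) (z : Fin d → ℝ) (hz : ∀ i, 0 < z i)
    {ε : ℝ} (hε : 0 < ε) :
    ∃ δ > (0:ℝ), ∀ w : Fin d → ℝ, ‖w - z‖ < δ →
      |gfun c d w - gfun c d z - ∑ i, gradg c d z i * (w i - z i)| ≤ ε * ‖w - z‖ := by
  have h := (HLgfun_hasFDerivAt c d z hz).isLittleO
  rw [Asymptotics.isLittleO_iff] at h
  obtain ⟨s, hs, hball⟩ := Filter.eventually_iff_exists_mem.mp (h hε)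
  obtain ⟨δ, hδ, hsub⟩ := Metric.mem_nhds_iff.mp hs
  refine ⟨δ, hδ, fun w hw => ?_⟩
  have hmem : w ∈ s := hsub (by simpa [dist_eq_norm] using hw)
  have h2 := hball w hmem
  simp only [Real.norm_eq_abs] at h2 ⊢
  rwa [HLgfun_deriv_apply c d z hz (w - z)] at h2

set_option maxHeartbeats 1000000 in
lemma HLexists_greatest (d : ℕ) (hd : 1 ≤ d) (c : ℝ) (hc : 0 < c)
    (u0 : (Fin d → ℝ) → ℝ) (hlip : LocallyLipschitz u0) (hdecay : DecayCond d u0)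
    (x : Fin d → ℝ) (t : ℝ) (ht : 0 < t) :
    ∃ y, y ≤ x ∧ ∀ y', y' ≤ x →
      u0 y' + t * gfun c d (t⁻¹ • (x - y')) ≤ u0 y + t * gfun c d (t⁻¹ • (x - y)) := by
  set r : ℝ := (d : ℝ) / ((d : ℝ) + 1) with hr
  have hd1 : (0:ℝ) < (d:ℝ) + 1 := by positivity
  have hrpos : 0 < r := by positivity
  have hr1 : (1:ℝ) - r = ((d:ℝ)+1)⁻¹ := by rw [hr]; field_simp; ring
  set F : (Fin d → ℝ) → ℝ := fun y => u0 y + t * gfun c d (t⁻¹ • (x - y)) with hF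
  set C : ℝ := c * t ^ (((d:ℝ)+1)⁻¹) * 2 ^ r + 1 with hC
  obtain ⟨M, hM, hMprop⟩ := hdecay x C
  rw [← hr] at hMprop
  set y₀ : Fin d → ℝ := x - fun _ => (1:ℝ) with hy₀
  have hy₀x : y₀ ≤ x := fun i => by simp [hy₀]
  have hFy₀ : u0 y₀ ≤ F y₀ := by
    have h0 : 0 ≤ t * gfun c d (t⁻¹ • (x - y₀)) := by
      refine mul_nonneg ht.le (HLgfun_nonneg c hc.le d _ fun i => ?_)
      have h1 : (x - y₀) i = 1 := by simp [hy₀]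
      simp only [Pi.smul_apply, h1, smul_eq_mul, mul_one]
      positivity
    simp only [hF]; linarith
  set A : ℝ := (|u0 y₀| + 1) ^ r⁻¹ with hA
  have hApos : 0 < A := Real.rpow_pos_of_pos (by positivity) _
  set R : ℝ := max M ‖x‖ + A + 1 with hR
  have hRM : M ≤ R := by
    have h1 : M ≤ max M ‖x‖ := le_max_left _ _
    linarith
  have hRx : ‖x‖ + 1 ≤ R := by
    have h1 : ‖x‖ ≤ max M ‖x‖ := le_max_right _ _
    linarith
  have hRA : A ≤ R := by
    have h0 : 0 ≤ max M ‖x‖ := le_trans hM.le (le_max_left _ _)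
    linarith
  have hkey : ∀ y, y ≤ x → R ≤ ‖y‖ → F y ≤ F y₀ := by
    intro y hyx hyR
    have hyM : M ≤ ‖y‖ := le_trans hRM hyR
    have hu0y : u0 y ≤ -C * ‖y‖ ^ r := hMprop y hyx hyM
    have hxy : ‖x‖ ≤ ‖y‖ := by linarith [hApos, hRx, hyR]
    have hcoord : ∀ i, (t⁻¹ • (x - y)) i ≤ 2 * ‖y‖ / t := by
      intro i
      have hx1 : |x i| ≤ ‖x‖ := by simpa using norm_le_pi_norm x i
      have hy1 : |y i| ≤ ‖y‖ := by simpa using norm_le_pi_norm y i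
      rw [abs_le] at hx1 hy1
      have h2 : x i - y i ≤ 2 * ‖y‖ := by linarith [hx1.2, hy1.1]
      simp only [Pi.smul_apply, Pi.sub_apply, smul_eq_mul]
      rw [inv_mul_eq_div, div_le_div_iff₀ ht ht]
      nlinarith
    have hcoord0 : ∀ i, 0 ≤ (t⁻¹ • (x - y)) i := by
      intro i
      simp only [Pi.smul_apply, Pi.sub_apply, smul_eq_mul]
      exact mul_nonneg (inv_nonneg.mpr ht.le) (sub_nonneg.mpr (hyx i))
    have hprodle : (∏ i, (t⁻¹ • (x - y)) i) ≤ (2 * ‖y‖ / t) ^ d := by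
      calc (∏ i, (t⁻¹ • (x - y)) i) ≤ ∏ _i : Fin d, (2 * ‖y‖ / t)  :=
            Finset.prod_le_prod (fun i _ => hcoord0 i) (fun i _ => hcoord i)
        _ = (2 * ‖y‖ / t) ^ d := by rw [Finset.prod_const, Finset.card_univ, Fintype.card_fin]
    have hynn : (0:ℝ) ≤ ‖y‖ := norm_nonneg y
    have hBnn : (0:ℝ) ≤ 2 * ‖y‖ / t := by positivity
    have hgle : gfun c d (t⁻¹ • (x - y)) ≤ c * (2 * ‖y‖ / t) ^ r := by
      have h3 : (∏ i, (t⁻¹ • (x - y)) i) ^ (((d:ℝ)+1)⁻¹)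
          ≤ ((2 * ‖y‖ / t) ^ d) ^ (((d:ℝ)+1)⁻¹) :=
        Real.rpow_le_rpow (Finset.prod_nonneg fun i _ => hcoord0 i) hprodle (by positivity)
      have h4 : ((2 * ‖y‖ / t) ^ d : ℝ) ^ (((d:ℝ)+1)⁻¹) = (2 * ‖y‖ / t) ^ r := by
        rw [← Real.rpow_natCast (2 * ‖y‖ / t) d, ← Real.rpow_mul hBnn]
        congr 1
      rw [gfun]
      calc c * (∏ i, (t⁻¹ • (x - y)) i) ^ (((d:ℝ)+1)⁻¹)
          ≤ c * ((2 * ‖y‖ / t) ^ d) ^ (((d:ℝ)+1)⁻¹) := mul_le_mul_of_nonneg_left h3 hc.le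
        _ = c * (2 * ‖y‖ / t) ^ r := by rw [h4]
    have hsplit : (2 * ‖y‖ / t) ^ r = 2 ^ r * ‖y‖ ^ r / t ^ r := by
      rw [Real.div_rpow (by positivity) ht.le, Real.mul_rpow (by norm_num) hynn]
    have htr : (0:ℝ) < t ^ r := Real.rpow_pos_of_pos ht r
    have htpow : t * (c * (2 ^ r * ‖y‖ ^ r / t ^ r)) = c * t ^ (((d:ℝ)+1)⁻¹) * 2 ^ r * ‖y‖ ^ r := by
      have h6 : t / t ^ r = t ^ (((d:ℝ)+1)⁻¹) := by
        rw [← hr1, Real.rpow_sub ht, Real.rpow_one]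
      rw [← h6]
      field_simp
    have hg2 : t * gfun c d (t⁻¹ • (x - y)) ≤ (C - 1) * ‖y‖ ^ r := by
      calc t * gfun c d (t⁻¹ • (x - y)) ≤ t * (c * (2 * ‖y‖ / t) ^ r) :=
            mul_le_mul_of_nonneg_left hgle ht.le
        _ = (C - 1) * ‖y‖ ^ r := by rw [hsplit, htpow, hC]; ring
    have hmain : F y ≤ -C * ‖y‖ ^ r + (C - 1) * ‖y‖ ^ r := add_le_add hu0y hg2
    have hAy : A ^ r ≤ ‖y‖ ^ r :=
      Real.rpow_le_rpow hApos.le (le_trans hRA hyR) hrpos.le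
    have hAr : A ^ r = |u0 y₀| + 1 := by
      rw [hA, ← Real.rpow_mul (by positivity), inv_mul_cancel₀ hrpos.ne', Real.rpow_one]
    have hFyle : F y ≤ -(|u0 y₀| + 1) := by
      have h7 : -C * ‖y‖ ^ r + (C - 1) * ‖y‖ ^ r = -(‖y‖ ^ r) := by ring
      rw [h7] at hmain
      rw [← hAr]
      linarith
    have h8 : -(|u0 y₀| + 1) ≤ u0 y₀ := by
      have := neg_abs_le (u0 y₀); linarith
    linarith [hFy₀]
  set K : Set (Fin d → ℝ) := Iic x ∩ closedBall 0 R with hK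
  have hKcomp : IsCompact K := (isCompact_closedBall (0 : Fin d → ℝ) R).inter_left isClosed_Iic
  have hy₀R : ‖y₀‖ ≤ R := by
    have h1 : ‖y₀‖ ≤ ‖x‖ + ‖fun _ : Fin d => (1:ℝ)‖ := norm_sub_le _ _
    have h2 : ‖fun _ : Fin d => (1:ℝ)‖ ≤ 1 := by
      rw [pi_norm_le_iff_of_nonneg (by norm_num)]
      intro i; simp
    linarith [hRx]
  have hy₀K : y₀ ∈ K := ⟨hy₀x, by simpa [mem_closedBall, dist_zero_right] using hy₀R⟩
  have hFcont : Continuous F := by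
    refine hlip.continuous.add (continuous_const.mul ?_)
    exact (HLgfun_continuous c d).comp ((continuous_const.sub continuous_id).const_smul t⁻¹)
  obtain ⟨ystar, hystarK, hmax⟩ :=
    hKcomp.exists_isMaxOn ⟨y₀, hy₀K⟩ hFcont.continuousOn
  refine ⟨ystar, hystarK.1, fun y' hy' => ?_⟩
  by_cases hcase : ‖y'‖ ≤ R
  · exact hmax ⟨hy', by simpa [mem_closedBall, dist_zero_right] using hcase⟩
  · have hy'R : R ≤ ‖y'‖ := le_of_lt (lt_of_not_ge hcase)
    exact le_trans (hkey y' hy' hy'R) (hmax hy₀K)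

lemma HLhlu_facts (d : ℕ) (hd : 1 ≤ d) (c : ℝ) (hc : 0 < c)
    (u0 : (Fin d → ℝ) → ℝ) (hlip : LocallyLipschitz u0) (hdecay : DecayCond d u0)
    (x : Fin d → ℝ) (t : ℝ) (ht : 0 < t) :
    (∃ y, y ∈ hlI c d u0 x t) ∧
    (∀ y', y' ≤ x → u0 y' + t * gfun c d (t⁻¹ • (x - y')) ≤ hlu c d u0 x t) := by
  obtain ⟨y, hyx, hmax⟩ := HLexists_greatest d hd c hc u0 hlip hdecay x t ht
  have hgr : IsGreatest (hlSet c d u0 x t) (u0 y + t * gfun c d (t⁻¹ • (x - y))) := by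
    constructor
    · exact ⟨y, hyx, rfl⟩
    · rintro v ⟨y', hy', rfl⟩
      exact hmax y' hy'
  have heq : hlu c d u0 x t = u0 y + t * gfun c d (t⁻¹ • (x - y)) := by
    rw [hlu, if_neg ht.ne']
    exact hgr.csSup_eq
  exact ⟨⟨y, hyx, heq⟩, fun y' hy' => heq ▸ hmax y' hy'⟩

set_option maxHeartbeats 1000000 in
lemma HLmem_hlI_lt (d : ℕ) (hd : 1 ≤ d) (c : ℝ) (hc : 0 < c)
    (u0 : (Fin d → ℝ) → ℝ) (hlip : LocallyLipschitz u0) (hdecay : DecayCond d u0)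
    (x : Fin d → ℝ) (t : ℝ) (ht : 0 < t) (y : Fin d → ℝ) (hy : y ∈ hlI c d u0 x t)
    (i : Fin d) : y i < x i := by
  by_contra hcon
  have hyx := hy.1
  have hyi : y i = x i := le_antisymm (hyx i) (not_lt.mp hcon)
  obtain ⟨-, hub⟩ := HLhlu_facts d hd c hc u0 hlip hdecay x t ht
  have hgz : gfun c d (t⁻¹ • (x - y)) = 0 := by
    rw [gfun]
    have hzero : (∏ j, (t⁻¹ • (x - y)) j) = 0 :=
      Finset.prod_eq_zero (Finset.mem_univ i) (by simp [hyi])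
    rw [hzero, Real.zero_rpow (by positivity), mul_zero]
  have hval : hlu c d u0 x t = u0 y := by rw [hy.2, hgz]; ring
  obtain ⟨K, s, hs, hK⟩ := hlip y
  obtain ⟨ρ, hρ, hball⟩ := Metric.mem_nhds_iff.mp hs
  set q : ℝ := ((d:ℝ)+1)⁻¹ with hq
  set r : ℝ := (d:ℝ) * q with hrdef
  have hd0 : (0:ℝ) < (d:ℝ) := by exact_mod_cast hd
  have hd1 : (0:ℝ) < (d:ℝ)+1 := by positivity
  have hqpos : 0 < q := by positivity
  have hrpos : 0 < r := mul_pos hd0 hqpos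
  have hqr : q + r = 1 := by
    rw [hrdef, hq]
    field_simp
    try ring
  have hK1 : (0:ℝ) < (K:ℝ) + 1 := by positivity
  have htq : 0 < t ^ q := Real.rpow_pos_of_pos ht q
  have htr : 0 < t ^ r := Real.rpow_pos_of_pos ht r
  set B0 : ℝ := c * t ^ q / ((K:ℝ) + 1) with hB0
  have hB0pos : 0 < B0 := by positivity
  set B1 : ℝ := B0 ^ ((d:ℝ)+1) with hB1
  have hB1pos : 0 < B1 := Real.rpow_pos_of_pos hB0pos _
  set ε : ℝ := min (ρ/2) (B1/2) with hε
  have hεpos : 0 < ε := lt_min (by positivity) (by positivity)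
  have hερ : ε < ρ := lt_of_le_of_lt (min_le_left _ _) (by linarith)
  have hεB1 : ε < B1 := lt_of_le_of_lt (min_le_right _ _) (by linarith)
  have hεq : ε ^ q < B0 := by
    have h1 : ε ^ q < B1 ^ q := Real.rpow_lt_rpow hεpos.le hεB1 hqpos
    have h2 : B1 ^ q = B0 := by
      rw [hB1, ← Real.rpow_mul hB0pos.le, hq, mul_inv_cancel₀ hd1.ne', Real.rpow_one]
    rwa [h2] at h1
  have h4 : ε ^ q * ε ^ r = ε := by rw [← Real.rpow_add hεpos, hqr, Real.rpow_one]
  have hmul : ((K:ℝ)+1) * ε < c * t ^ q * ε ^ r := by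
    have hεr : 0 < ε ^ r := Real.rpow_pos_of_pos hεpos r
    calc ((K:ℝ)+1) * ε = ε ^ q * (((K:ℝ)+1) * ε ^ r) := by linear_combination (-((K:ℝ)+1)) * h4
      _ < B0 * (((K:ℝ)+1) * ε ^ r) :=
          mul_lt_mul_of_pos_right hεq (by positivity)
      _ = c * t ^ q * ε ^ r := by rw [hB0]; field_simp
  set y' : Fin d → ℝ := y - fun _ => ε with hy'
  have hy'x : y' ≤ x := fun j => by
    have := hyx j
    simp only [hy', Pi.sub_apply]
    linarith [hεpos]
  have hdist : dist y' y ≤ ε := by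
    rw [dist_eq_norm]
    have hd2 : y' - y = fun _ => -ε := by funext j; simp [hy']
    rw [hd2, pi_norm_le_iff_of_nonneg hεpos.le]
    intro j
    simp [abs_of_pos hεpos]
  have hy's : y' ∈ s := hball (mem_ball.mpr (lt_of_le_of_lt hdist hερ))
  have hys : y ∈ s := hball (mem_ball_self hρ)
  have hlipb : u0 y - u0 y' ≤ (K:ℝ) * ε := by
    have h6 := hK.dist_le_mul y hys y' hy's
    have h7 : dist y y' ≤ ε := by rwa [dist_comm] at hdist
    calc u0 y - u0 y' ≤ |u0 y - u0 y'| := le_abs_self _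
      _ = dist (u0 y) (u0 y') := (Real.dist_eq _ _).symm
      _ ≤ (K:ℝ) * dist y y' := h6
      _ ≤ (K:ℝ) * ε := mul_le_mul_of_nonneg_left h7 K.coe_nonneg
  have hcoordge : ∀ j, ε / t ≤ (t⁻¹ • (x - y')) j := by
    intro j
    have h9 : ε ≤ x j - y' j := by
      have := hyx j
      simp only [hy', Pi.sub_apply]
      linarith
    simp only [Pi.smul_apply, Pi.sub_apply, smul_eq_mul]
    calc ε / t = t⁻¹ * ε := by rw [inv_mul_eq_div]
      _ ≤ t⁻¹ * (x j - y' j) := by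
          refine mul_le_mul_of_nonneg_left ?_ (inv_nonneg.mpr ht.le)
          simpa only [hy', Pi.sub_apply] using h9
  have hprodge : (ε/t)^d ≤ ∏ j, (t⁻¹ • (x - y')) j := by
    calc (ε/t)^d = ∏ _j : Fin d, (ε/t) := by
          rw [Finset.prod_const, Finset.card_univ, Fintype.card_fin]
      _ ≤ ∏ j, (t⁻¹ • (x - y')) j :=
          Finset.prod_le_prod (fun j _ => by positivity) (fun j _ => hcoordge j)
  have hgge : c * (ε/t) ^ r ≤ gfun c d (t⁻¹ • (x - y')) := by
    rw [gfun]
    have h10 : ((ε/t)^d : ℝ) ^ q ≤ (∏ j, (t⁻¹ • (x - y')) j) ^ q :=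
      Real.rpow_le_rpow (by positivity) hprodge hqpos.le
    have h11 : ((ε/t)^d : ℝ) ^ q = (ε/t) ^ r := by
      rw [← Real.rpow_natCast (ε/t) d, ← Real.rpow_mul (by positivity : (0:ℝ) ≤ ε/t)]
    rw [← h11]
    exact mul_le_mul_of_nonneg_left h10 hc.le
  have h12 : t * (c * (ε/t)^r) = c * t^q * ε^r := by
    rw [Real.div_rpow hεpos.le ht.le]
    have h13 : t ^ q = t / t ^ r := by
      rw [show q = 1 - r by linarith [hqr], Real.rpow_sub ht, Real.rpow_one]
    rw [h13]
    field_simp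
  have h14 : c * t^q * ε^r ≤ t * gfun c d (t⁻¹ • (x - y')) := by
    rw [← h12]
    exact mul_le_mul_of_nonneg_left hgge ht.le
  have hFy' := hub y' hy'x
  rw [hval] at hFy'
  linarith [hmul, hlipb, h14, hFy', hεpos]

lemma HLsuper_eq_sub (d : ℕ) (u0 : (Fin d → ℝ) → ℝ) (y : Fin d → ℝ)
    (q : Fin d → ℝ) (hq : q ∈ subdiff d u0 y)
    (p : Fin d → ℝ) (hp : p ∈ superdiff d u0 y) : p = q := by
  set w : Fin d → ℝ := fun i => q i - p i with hw
  have hwnn : (0:ℝ) ≤ ‖w‖ := norm_nonneg w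
  have key : ∀ ε > (0:ℝ), ∑ i, w i * w i ≤ 2 * ε * ‖w‖ := by
    intro ε hε
    obtain ⟨δ1, hδ1, h1⟩ := hq ε hε
    obtain ⟨δ2, hδ2, h2⟩ := hp ε hε
    have hmin : 0 < min δ1 δ2 := lt_min hδ1 hδ2
    set h : ℝ := min δ1 δ2 / (2 * (‖w‖ + 1)) with hh
    have hhpos : 0 < h := div_pos hmin (by positivity)
    set y' : Fin d → ℝ := y + h • w with hy'
    have hyy : y' - y = h • w := by rw [hy']; exact add_sub_cancel_left _ _
    have hnorm : ‖y' - y‖ = h * ‖w‖ := by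
      rw [hyy, norm_smul, Real.norm_eq_abs, abs_of_pos hhpos]
    have hlt : ‖y' - y‖ < min δ1 δ2 := by
      rw [hnorm, hh, div_mul_eq_mul_div, div_lt_iff₀ (by positivity)]
      nlinarith [hwnn, hmin]
    have e1 := h1 y' (lt_of_lt_of_le hlt (min_le_left _ _))
    have e2 := h2 y' (lt_of_lt_of_le hlt (min_le_right _ _))
    have hcoord : ∀ i, y' i - y i = h * w i := fun i => by
      simp [hy', smul_eq_mul]
    have hsq : ∑ i, q i * (y' i - y i) - ∑ i, p i * (y' i - y i)
        = h * ∑ i, w i * w i := by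
      rw [← Finset.sum_sub_distrib, Finset.mul_sum]
      refine Finset.sum_congr rfl fun i _ => ?_
      rw [hcoord i]
      show q i * (h * w i) - p i * (h * w i) = h * ((q i - p i) * (q i - p i))
      ring
    rw [hnorm] at e1 e2
    have hfin : h * (∑ i, w i * w i) ≤ h * (2 * ε * ‖w‖) := by nlinarith [e1, e2, hsq]
    exact (mul_le_mul_iff_right₀ hhpos).mp hfin
  have hS : ∑ i, w i * w i ≤ 0 := by
    by_contra hcon
    push_neg at hcon
    have hwpos : 0 < ‖w‖ + 1 := by positivity
    have hkey := key ((∑ i, w i * w i) / (4 * (‖w‖+1))) (by positivity)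
    have h2ε : 2 * ((∑ i, w i * w i) / (4 * (‖w‖+1))) * ‖w‖
        = (∑ i, w i * w i) * ‖w‖ / (2*(‖w‖+1)) := by
      field_simp
      ring
    rw [h2ε, le_div_iff₀ (by positivity : (0:ℝ) < 2*(‖w‖+1))] at hkey
    nlinarith [hkey, hcon, hwnn]
  have hS0 : ∀ i, w i = 0 := by
    intro i
    have hnn : ∀ j ∈ Finset.univ, (0:ℝ) ≤ w j * w j := fun j _ => mul_self_nonneg _
    have hz : ∑ i, w i * w i = 0 :=
      le_antisymm hS (Finset.sum_nonneg hnn)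
    exact mul_self_eq_zero.mp ((Finset.sum_eq_zero_iff_of_nonneg hnn).mp hz i (Finset.mem_univ i))
  funext i
  have h0 : q i - p i = 0 := hS0 i
  linarith

set_option maxHeartbeats 1000000 in
/-- (a) `W(y,t) ⊆ { y − t∇f(p) : p ∈ D⁺u₀(y) ∩ (0,∞)^d }`; consequently if `D⁻u₀(y) ≠ ∅`
then `W(y,t)` has at most one point. (b) For `s > 0` and any maximizer `y ∈ I(x,s)`,
`∇g((x−y)/s) ∈ D⁻(u(·,s))(x)`; in particular `D⁻(u(·,s))(x)` is nonempty for all `x`. -/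
theorem hlW_subset_and_subdiff
    (d : ℕ) (hd : 1 ≤ d) (c : ℝ) (hc : 0 < c)
    (u0 : (Fin d → ℝ) → ℝ) (hmono : Monotone u0) (hlip : LocallyLipschitz u0)
    (hdecay : DecayCond d u0) :
    (∀ (y : Fin d → ℝ) (t : ℝ), 0 < t →
        hlW c d u0 y t ⊆
          {x | ∃ p ∈ superdiff d u0 y, (∀ i, 0 < p i) ∧ x = y - t • gradf c d p}) ∧
    (∀ (y : Fin d → ℝ) (t : ℝ), 0 < t → (subdiff d u0 y).Nonempty →
        (hlW c d u0 y t).Subsingleton) ∧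
    (∀ (s : ℝ), 0 < s → ∀ (x : Fin d → ℝ), ∀ y ∈ hlI c d u0 x s,
        gradg c d (s⁻¹ • (x - y)) ∈ subdiff d (fun z => hlu c d u0 z s) x) ∧
    (∀ (s : ℝ), 0 < s → ∀ (x : Fin d → ℝ),
        (subdiff d (fun z => hlu c d u0 z s) x).Nonempty) := by
  have partA : ∀ (y : Fin d → ℝ) (t : ℝ), 0 < t → ∀ x ∈ hlW c d u0 y t,
      ∃ p ∈ superdiff d u0 y, (∀ i, 0 < p i) ∧ x = y - t • gradf c d p := by
    intro y t ht x hx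
    have hyI : y ∈ hlI c d u0 x t := ⟨hx.1, hx.2⟩
    have hstrict : ∀ i, y i < x i := HLmem_hlI_lt d hd c hc u0 hlip hdecay x t ht y hyI
    set z : Fin d → ℝ := t⁻¹ • (x - y) with hzdef
    have hz : ∀ i, 0 < z i := fun i => by
      simp only [hzdef, Pi.smul_apply, Pi.sub_apply, smul_eq_mul]
      exact mul_pos (inv_pos.mpr ht) (sub_pos.mpr (hstrict i))
    refine ⟨gradg c d z, ?_, fun i => HLgradg_pos c hc d z hz i, ?_⟩
    · intro ε hε
      obtain ⟨δ', hδ', hgd⟩ := HLgfun_epsdelta c d z hz hε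
      obtain ⟨i0, -, hmin⟩ := Finset.exists_min_image Finset.univ
        (fun i => x i - y i) ⟨⟨0, hd⟩, Finset.mem_univ _⟩
      set m : ℝ := x i0 - y i0 with hm
      have hmpos : 0 < m := sub_pos.mpr (hstrict i0)
      have hmle : ∀ i, m ≤ x i - y i := fun i => hmin i (Finset.mem_univ i)
      obtain ⟨-, hub⟩ := HLhlu_facts d hd c hc u0 hlip hdecay x t ht
      refine ⟨min (t * δ') m, lt_min (by positivity) hmpos, fun y' hy' => ?_⟩
      have hy'1 : ‖y' - y‖ < t * δ' := lt_of_lt_of_le hy' (min_le_left _ _)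
      have hy'2 : ‖y' - y‖ < m := lt_of_lt_of_le hy' (min_le_right _ _)
      have hy'x : y' ≤ x := by
        intro i
        have h1 : |y' i - y i| ≤ ‖y' - y‖ := by
          simpa using norm_le_pi_norm (y' - y) i
        have h2 := (abs_le.mp h1).1
        have h3 := hmle i
        have h4 := (abs_le.mp h1).2
        linarith
      set w : Fin d → ℝ := t⁻¹ • (x - y') with hwdef
      have hwz : w - z = t⁻¹ • (y - y') := by
        funext i
        simp only [hwdef, hzdef, Pi.smul_apply, Pi.sub_apply, smul_eq_mul]
        ring
      have hnwz : ‖w - z‖ = t⁻¹ * ‖y' - y‖ := by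
        rw [hwz, norm_smul, Real.norm_eq_abs, abs_of_pos (inv_pos.mpr ht), norm_sub_rev]
      have hwzlt : ‖w - z‖ < δ' := by
        rw [hnwz]
        calc t⁻¹ * ‖y' - y‖ < t⁻¹ * (t * δ') :=
              mul_lt_mul_of_pos_left hy'1 (inv_pos.mpr ht)
          _ = δ' := by field_simp
      have habs := abs_le.mp (hgd w hwzlt)
      have hup : u0 y' - u0 y ≤ t * gfun c d z - t * gfun c d w := by
        have h5 := hub y' hy'x
        rw [← hwdef] at h5
        have h3 := hx.2
        linarith
      have hsum : ∑ i, gradg c d z i * (y' i - y i)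
          = -(t * ∑ i, gradg c d z i * (w i - z i)) := by
        rw [Finset.mul_sum, ← Finset.sum_neg_distrib]
        refine Finset.sum_congr rfl fun i _ => ?_
        have hwzi : w i - z i = t⁻¹ * (y i - y' i) := by
          rw [show w i - z i = (w - z) i from rfl, hwz]
          simp [smul_eq_mul]
        rw [hwzi]
        field_simp
        ring
      have hteq : t * ‖w - z‖ = ‖y' - y‖ := by
        rw [hnwz]; field_simp
      calc u0 y' - u0 y - ∑ i, gradg c d z i * (y' i - y i)
          = (u0 y' - u0 y) + t * ∑ i, gradg c d z i * (w i - z i) := by rw [hsum]; ring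
        _ ≤ (t * gfun c d z - t * gfun c d w) + t * ∑ i, gradg c d z i * (w i - z i) := by
            linarith
        _ = -(t * (gfun c d w - gfun c d z - ∑ i, gradg c d z i * (w i - z i))) := by ring
        _ ≤ t * (ε * ‖w - z‖) := by
            have h6 := mul_le_mul_of_nonneg_left
              (show -(gfun c d w - gfun c d z - ∑ i, gradg c d z i * (w i - z i)) ≤ ε * ‖w - z‖
                by linarith [habs.1]) ht.le
            linarith
        _ = ε * ‖y' - y‖ := by
            rw [show t * (ε * ‖w - z‖) = ε * (t * ‖w - z‖) by ring, hteq]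
    · funext i
      rw [HLgradf_gradg c hc d z hz]
      simp only [Pi.sub_apply, Pi.smul_apply, smul_eq_mul]
      have h7 : z i = t⁻¹ * (x i - y i) := by
        simp [hzdef, smul_eq_mul]
      rw [h7]
      field_simp
      ring
  have part3 : ∀ (s : ℝ), 0 < s → ∀ (x : Fin d → ℝ), ∀ y ∈ hlI c d u0 x s,
      gradg c d (s⁻¹ • (x - y)) ∈ subdiff d (fun z => hlu c d u0 z s) x := by
    intro s hs x y hy
    have hstrict : ∀ i, y i < x i := HLmem_hlI_lt d hd c hc u0 hlip hdecay x s hs y hy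
    set z : Fin d → ℝ := s⁻¹ • (x - y) with hzdef
    have hz : ∀ i, 0 < z i := fun i => by
      simp only [hzdef, Pi.smul_apply, Pi.sub_apply, smul_eq_mul]
      exact mul_pos (inv_pos.mpr hs) (sub_pos.mpr (hstrict i))
    intro ε hε
    obtain ⟨δ', hδ', hgd⟩ := HLgfun_epsdelta c d z hz hε
    obtain ⟨i0, -, hmin⟩ := Finset.exists_min_image Finset.univ
      (fun i => x i - y i) ⟨⟨0, hd⟩, Finset.mem_univ _⟩
    set m : ℝ := x i0 - y i0 with hm
    have hmpos : 0 < m := sub_pos.mpr (hstrict i0)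
    have hmle : ∀ i, m ≤ x i - y i := fun i => hmin i (Finset.mem_univ i)
    refine ⟨min (s * δ') m, lt_min (by positivity) hmpos, fun x' hx' => ?_⟩
    have hx'1 : ‖x' - x‖ < s * δ' := lt_of_lt_of_le hx' (min_le_left _ _)
    have hx'2 : ‖x' - x‖ < m := lt_of_lt_of_le hx' (min_le_right _ _)
    have hyx' : y ≤ x' := by
      intro i
      have h1 : |x' i - x i| ≤ ‖x' - x‖ := by
        simpa using norm_le_pi_norm (x' - x) i
      have h2 := (abs_le.mp h1).1
      have h3 := hmle i
      linarith
    set w : Fin d → ℝ := s⁻¹ • (x' - y) with hwdef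
    have hwz : w - z = s⁻¹ • (x' - x) := by
      funext i
      simp only [hwdef, hzdef, Pi.smul_apply, Pi.sub_apply, smul_eq_mul]
      ring
    have hnwz : ‖w - z‖ = s⁻¹ * ‖x' - x‖ := by
      rw [hwz, norm_smul, Real.norm_eq_abs, abs_of_pos (inv_pos.mpr hs)]
    have hwzlt : ‖w - z‖ < δ' := by
      rw [hnwz]
      calc s⁻¹ * ‖x' - x‖ < s⁻¹ * (s * δ') :=
            mul_lt_mul_of_pos_left hx'1 (inv_pos.mpr hs)
        _ = δ' := by field_simp
    have habs := abs_le.mp (hgd w hwzlt)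
    obtain ⟨-, hub⟩ := HLhlu_facts d hd c hc u0 hlip hdecay x' s hs
    have hlow : u0 y + s * gfun c d w ≤ hlu c d u0 x' s := by
      have h5 := hub y hyx'
      rw [← hwdef] at h5
      exact h5
    have hxval : hlu c d u0 x s = u0 y + s * gfun c d z := hy.2
    have hsum : ∑ i, gradg c d z i * (x' i - x i)
        = s * ∑ i, gradg c d z i * (w i - z i) := by
      rw [Finset.mul_sum]
      refine Finset.sum_congr rfl fun i _ => ?_
      have hwzi : w i - z i = s⁻¹ * (x' i - x i) := by
        rw [show w i - z i = (w - z) i from rfl, hwz]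
        simp [smul_eq_mul]
      rw [hwzi]
      field_simp
    have hteq : s * ‖w - z‖ = ‖x' - x‖ := by
      rw [hnwz]; field_simp
    show -(ε * ‖x' - x‖) ≤ hlu c d u0 x' s - hlu c d u0 x s
        - ∑ i, gradg c d z i * (x' i - x i)
    calc -(ε * ‖x' - x‖) = -(s * (ε * ‖w - z‖)) := by
          rw [show s * (ε * ‖w - z‖) = ε * (s * ‖w - z‖) by ring, hteq]
      _ ≤ s * (gfun c d w - gfun c d z - ∑ i, gradg c d z i * (w i - z i)) := by
          have h6 := mul_le_mul_of_nonneg_left habs.1 hs.le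
          linarith
      _ = (u0 y + s * gfun c d w) - (u0 y + s * gfun c d z)
          - s * ∑ i, gradg c d z i * (w i - z i) := by ring
      _ ≤ hlu c d u0 x' s - hlu c d u0 x s - ∑ i, gradg c d z i * (x' i - x i) := by
          rw [hsum, hxval]
          linarith
  refine ⟨fun y t ht x hx => partA y t ht x hx, ?_, part3, ?_⟩
  · intro y t ht hne x1 hx1 x2 hx2
    obtain ⟨q, hq⟩ := hne
    obtain ⟨p1, hp1, hp1pos, hx1e⟩ := partA y t ht x1 hx1
    obtain ⟨p2, hp2, hp2pos, hx2e⟩ := partA y t ht x2 hx2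
    rw [hx1e, hx2e, HLsuper_eq_sub d u0 y q hq p1 hp1, HLsuper_eq_sub d u0 y q hq p2 hp2]
  · intro s hs x
    obtain ⟨⟨y, hy⟩, -⟩ := HLhlu_facts d hd c hc u0 hlip hdecay x s hs
    exact ⟨gradg c d (s⁻¹ • (x - y)), part3 s hs x y hy⟩

end
end

section
/- Let ν ≥ 2 and k ≥ 1 be integers and let a < b in ℝ^ν (coordinatewise strict inequality). If X_1, …, X_k are independent random points, each uniformly distributed on the rectangle [a,b] ⊆ ℝ^ν, then the probability that they form an increasing chain in some order — i.e., that there exists a permutation π of {1,…,k} with X_{π(1)} < X_{π(2)} < ⋯ < X_{π(k)}, where x < y means x_i < y_i for every coordinate i — equals (k!)^{−(ν−1)}. -/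
open MeasureTheory

noncomputable section

/-- The uniform distribution on the rectangle `[a,b] ⊆ ℝ^ν`. -/
def uniformBox (ν : ℕ) (a b : Fin ν → ℝ) : Measure (Fin ν → ℝ) :=
  (volume (Set.Icc a b))⁻¹ • volume.restrict (Set.Icc a b)

open Set Function

namespace ChainAux

/-- Uniqueness of the sorting permutation of a function. -/
lemma perm_unique {k : ℕ} {α : Type*} [LinearOrder α] {y : Fin k → α}
    {π σ : Equiv.Perm (Fin k)} (hπ : StrictMono (y ∘ π)) (hσ : StrictMono (y ∘ σ)) :
    π = σ := by
  have hr : Set.range (y ∘ ⇑π) = Set.range (y ∘ ⇑σ) := by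
    rw [Set.range_comp, Set.range_comp, Equiv.range_eq_univ, Equiv.range_eq_univ]
  haveI hwf : WellFoundedLT (Fin k) := inferInstance
  have heq : y ∘ ⇑π = y ∘ ⇑σ := (@StrictMono.range_inj (Fin k) α _ _ hwf _ _ hπ hσ).1 hr
  have hyinj : Function.Injective y := by
    intro u v huv
    have h2 : (y ∘ ⇑π) (π.symm u) = (y ∘ ⇑π) (π.symm v) := by
      simpa [Function.comp] using huv
    have h3 : π.symm u = π.symm v := hπ.injective h2
    exact π.symm.injective h3
  exact Equiv.ext fun i => hyinj (congrFun heq i)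

/-- Permuting the coordinates of an iid product preserves the measure. -/
lemma mp_perm {k : ℕ} {β : Type*} [MeasurableSpace β] (Q : Measure β) [SigmaFinite Q]
    (π : Equiv.Perm (Fin k)) :
    MeasurePreserving (fun (X : Fin k → β) (i : Fin k) => X (π i))
      (Measure.pi fun _ => Q) (Measure.pi fun _ => Q) := by
  have h := measurePreserving_arrowCongr' (fun _ : Fin k => Q) (fun _ : Fin k => Q)
      π.symm (MeasurableEquiv.refl β) (fun _ => MeasurePreserving.id Q)
  have hfun : (fun (X : Fin k → β) (i : Fin k) => X (π i)) =
      ⇑(MeasurableEquiv.arrowCongr' π.symm (MeasurableEquiv.refl β)) := by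
    funext X i
    simp [MeasurableEquiv.arrowCongr', Equiv.arrowCongr', Equiv.arrowCongr]
  rw [hfun]
  exact h

/-- The transpose map is measure preserving between products of products. -/
lemma mp_transpose {ι κ : Type*} [Fintype ι] [Fintype κ] {α : Type*} [MeasurableSpace α]
    (μ : κ → Measure α) [∀ j, SigmaFinite (μ j)] :
    MeasurePreserving (fun (X : ι → κ → α) (j : κ) (i : ι) => X i j)
      (Measure.pi fun _ : ι => Measure.pi μ)
      (Measure.pi fun j => Measure.pi fun _ : ι => μ j) := by
  classical
  have hTmeas : Measurable fun (X : ι → κ → α) (j : κ) (i : ι) => X i j :=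
    measurable_pi_lambda _ fun j => measurable_pi_lambda _ fun i =>
      (measurable_pi_apply j).comp (measurable_pi_apply i)
  refine ⟨hTmeas, ?_⟩
  refine (Measure.pi_eq_generateFrom
      (C := fun _ => Set.pi Set.univ '' Set.pi Set.univ (fun _ : ι => {s : Set α | MeasurableSet s}))
      (fun _ => generateFrom_pi) (fun _ => IsPiSystem.pi fun _ => MeasurableSpace.isPiSystem_measurableSet)
      (fun j => Measure.FiniteSpanningSetsIn.pi (fun _ => (μ j).toFiniteSpanningSetsIn)) ?_).symm
  intro s hs
  choose t ht hts using hs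
  have htm : ∀ j i, MeasurableSet (t j i) := fun j i => ht j i (mem_univ i)
  have hsm : ∀ j, MeasurableSet (s j) := fun j => by
    rw [← hts j]; exact MeasurableSet.pi countable_univ fun i _ => htm j i
  rw [Measure.map_apply hTmeas (MeasurableSet.pi countable_univ fun j _ => hsm j)]
  have hpre : (fun (X : ι → κ → α) (j : κ) (i : ι) => X i j) ⁻¹' Set.pi Set.univ s
      = Set.pi Set.univ fun i => Set.pi Set.univ fun j => t j i := by
    ext X
    simp only [Set.mem_preimage, Set.mem_pi, Set.mem_univ, true_implies]
    have hj : ∀ j, ((fun i => X i j) ∈ s j ↔ ∀ i, X i j ∈ t j i) := fun j => by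
      rw [← hts j]; simp [Set.mem_pi]
    simp only [hj]
    exact ⟨fun h i j => h j i, fun h j i => h i j⟩
  rw [hpre, Measure.pi_pi]
  simp_rw [Measure.pi_pi]
  rw [Finset.prod_comm]
  refine Finset.prod_congr rfl fun j _ => ?_
  rw [← hts j, Measure.pi_pi]

/-- The set where two fixed coordinates agree is null for an atomless iid product. -/
lemma null_eq_coords {n : ℕ} (μ : Measure ℝ) [IsProbabilityMeasure μ] [NullSingletonClass μ]
    {i j : Fin (n + 1)} (hij : j ≠ i) :
    (Measure.pi fun _ : Fin (n + 1) => μ) {y | y i = y j} = 0 := by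
  obtain ⟨j', rfl⟩ := Fin.exists_succAbove_eq hij
  set e := MeasurableEquiv.piFinSuccAbove (fun _ : Fin (n + 1) => ℝ) i with he
  have hp := measurePreserving_piFinSuccAbove (fun _ : Fin (n + 1) => μ) i
  have hS : MeasurableSet {p : ℝ × (Fin n → ℝ) | p.1 = p.2 j'} :=
    measurableSet_eq_fun measurable_fst ((measurable_pi_apply j').comp measurable_snd)
  have hpre : {y : Fin (n + 1) → ℝ | y i = y (i.succAbove j')}
      = e ⁻¹' {p : ℝ × (Fin n → ℝ) | p.1 = p.2 j'} := by
    ext y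
    simp [he, MeasurableEquiv.piFinSuccAbove, Fin.removeNth, Fin.insertNthEquiv]
  rw [hpre, hp.measure_preimage hS.nullMeasurableSet]
  rw [Measure.prod_apply_symm hS]
  have : ∀ z : Fin n → ℝ, (fun x : ℝ => (x, z)) ⁻¹' {p : ℝ × (Fin n → ℝ) | p.1 = p.2 j'}
      = {z j'} := by
    intro z; ext x; simp
  simp [this, measure_singleton]

/-- Probability that an iid atomless sample is strictly increasing. -/
lemma pi_strictMono_prob {k : ℕ} (hk : 1 ≤ k) (μ : Measure ℝ) [IsProbabilityMeasure μ]
    [NullSingletonClass μ] :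
    (Measure.pi fun _ : Fin k => μ) {y | StrictMono y} = ((k.factorial : ENNReal))⁻¹ := by
  classical
  set M := Measure.pi fun _ : Fin k => μ with hM
  have hSMmeas : MeasurableSet {y : Fin k → ℝ | StrictMono y} := by
    have : {y : Fin k → ℝ | StrictMono y}
        = ⋂ (a : Fin k), ⋂ (b : Fin k), ⋂ (_ : a < b), {y : Fin k → ℝ | y a < y b} := by
      ext y; simp [StrictMono, Set.mem_iInter]
    rw [this]
    exact MeasurableSet.iInter fun a => MeasurableSet.iInter fun b =>
      MeasurableSet.iInter fun _ => measurableSet_lt (measurable_pi_apply _) (measurable_pi_apply _)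
  set C : Equiv.Perm (Fin k) → Set (Fin k → ℝ) := fun π => {y | StrictMono (y ∘ π)} with hC
  have hCpre : ∀ π : Equiv.Perm (Fin k),
      C π = (fun (X : Fin k → ℝ) (i : Fin k) => X (π i)) ⁻¹' {y : Fin k → ℝ | StrictMono y} := by
    intro π; rfl
  have hCmeas : ∀ π, MeasurableSet (C π) := by
    intro π
    rw [hCpre π]
    exact hSMmeas.preimage (measurable_pi_lambda _ fun i => measurable_pi_apply _)
  have hCval : ∀ π, M (C π) = M {y : Fin k → ℝ | StrictMono y} := by
    intro π
    rw [hCpre π, hM]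
    exact (mp_perm μ π).measure_preimage hSMmeas.nullMeasurableSet
  have hdisj : Pairwise (Disjoint on C) := by
    intro π σ hne
    refine Set.disjoint_left.2 fun y hyπ hyσ => hne ?_
    exact perm_unique hyπ hyσ
  have hNnull : M {y : Fin k → ℝ | ¬ Function.Injective y} = 0 := by
    obtain ⟨n, rfl⟩ : ∃ n, k = n + 1 := ⟨k - 1, (Nat.succ_pred_eq_of_pos hk).symm⟩
    have hsub : {y : Fin (n + 1) → ℝ | ¬ Function.Injective y}
        ⊆ ⋃ (i : Fin (n + 1)) (j : Fin (n + 1)) (_ : j ≠ i), {y : Fin (n + 1) → ℝ | y i = y j} := by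
      intro y hy
      simp only [Set.mem_setOf_eq, Function.Injective, not_forall] at hy
      obtain ⟨i, j, hval, hne⟩ := hy
      exact Set.mem_iUnion.2 ⟨i, Set.mem_iUnion.2 ⟨j, Set.mem_iUnion.2
        ⟨fun h => hne (h ▸ rfl), hval⟩⟩⟩
    refine measure_mono_null hsub ?_
    exact measure_iUnion_null fun i => measure_iUnion_null fun j =>
      measure_iUnion_null fun hj => null_eq_coords μ hj
  have hcover : (Set.univ : Set (Fin k → ℝ))
      ⊆ (⋃ π : Equiv.Perm (Fin k), C π) ∪ {y | ¬ Function.Injective y} := by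
    intro y _
    by_cases hy : Function.Injective y
    · left
      refine Set.mem_iUnion.2 ⟨Tuple.sort y, ?_⟩
      exact (Tuple.monotone_sort y).strictMono_of_injective (hy.comp (Tuple.sort y).injective)
    · right; exact hy
  have hU : M (⋃ π : Equiv.Perm (Fin k), C π) = 1 := by
    have hMprob : IsProbabilityMeasure M := by rw [hM]; infer_instance
    refine le_antisymm prob_le_one ?_
    calc (1 : ENNReal) = M Set.univ := (measure_univ).symm
      _ ≤ M ((⋃ π : Equiv.Perm (Fin k), C π) ∪ {y | ¬ Function.Injective y}) :=
          measure_mono hcover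
      _ ≤ M (⋃ π : Equiv.Perm (Fin k), C π) + M {y | ¬ Function.Injective y} :=
          measure_union_le _ _
      _ = M (⋃ π : Equiv.Perm (Fin k), C π) := by rw [hNnull, add_zero]
  have hsum : M (⋃ π : Equiv.Perm (Fin k), C π)
      = (k.factorial : ENNReal) * M {y : Fin k → ℝ | StrictMono y} := by
    rw [measure_iUnion hdisj hCmeas, tsum_fintype]
    simp only [hCval]
    rw [Finset.sum_const, Finset.card_univ, Fintype.card_perm, Fintype.card_fin, nsmul_eq_mul]
  have hmul : (k.factorial : ENNReal) * M {y : Fin k → ℝ | StrictMono y} = 1 := by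
    rw [← hsum]; exact hU
  have hfac0 : (k.factorial : ENNReal) ≠ 0 := Nat.cast_ne_zero.2 k.factorial_ne_zero
  have hfact : (k.factorial : ENNReal) ≠ ⊤ := ENNReal.natCast_ne_top _
  calc M {y : Fin k → ℝ | StrictMono y}
      = ((k.factorial : ENNReal))⁻¹ * ((k.factorial : ENNReal)
          * M {y : Fin k → ℝ | StrictMono y}) := by
        rw [← mul_assoc, ENNReal.inv_mul_cancel hfac0 hfact, one_mul]
    _ = ((k.factorial : ENNReal))⁻¹ := by rw [hmul, mul_one]

/-- The 1-dimensional uniform distribution on `[a,b]`. -/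
def unif (a b : ℝ) : Measure ℝ := (volume (Set.Icc a b))⁻¹ • volume.restrict (Set.Icc a b)

lemma unif_prob {a b : ℝ} (h : a < b) : IsProbabilityMeasure (unif a b) := by
  constructor
  rw [unif, Measure.smul_apply, smul_eq_mul, Measure.restrict_apply MeasurableSet.univ,
    Set.univ_inter, Real.volume_Icc]
  refine ENNReal.inv_mul_cancel ?_ ENNReal.ofReal_ne_top
  simp only [ne_eq, ENNReal.ofReal_eq_zero, not_le]
  linarith

instance unif_noAtoms (a b : ℝ) : NullSingletonClass (unif a b) := by
  constructor
  intro x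
  rw [unif, Measure.smul_apply, smul_eq_mul, Measure.restrict_apply (measurableSet_singleton x)]
  rw [measure_mono_null Set.inter_subset_left (measure_singleton x), mul_zero]

lemma uniformBox_eq {ν : ℕ} (a b : Fin ν → ℝ) (hab : ∀ i, a i < b i) :
    uniformBox ν a b = Measure.pi fun l => unif (a l) (b l) := by
  haveI : ∀ l, IsProbabilityMeasure (unif (a l) (b l)) := fun l => unif_prob (hab l)
  refine (Measure.pi_eq fun s hs => ?_).symm
  rw [uniformBox, Measure.smul_apply, smul_eq_mul,
    Measure.restrict_apply (MeasurableSet.pi countable_univ fun l _ => hs l)]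
  have hIcc : (Set.Icc a b) = Set.pi Set.univ fun l => Set.Icc (a l) (b l) :=
    (Set.pi_univ_Icc a b).symm
  have hinter : Set.pi Set.univ s ∩ Set.Icc a b
      = Set.pi Set.univ fun l => s l ∩ Set.Icc (a l) (b l) := by
    rw [hIcc, ← Set.pi_inter_distrib]
  have hvol : volume (Set.Icc a b) = ∏ l, volume (Set.Icc (a l) (b l)) := by
    rw [hIcc, volume_pi_pi]
  rw [hinter, volume_pi_pi, hvol]
  have hne : ∀ l, volume (Set.Icc (a l) (b l)) ≠ 0 := by
    intro l
    rw [Real.volume_Icc]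
    simp only [ne_eq, ENNReal.ofReal_eq_zero, not_le]
    have := hab l; linarith
  rw [ENNReal.prod_inv_distrib (fun l _ m _ _ => Or.inl (hne l)), ← Finset.prod_mul_distrib]
  refine Finset.prod_congr rfl fun l _ => ?_
  rw [unif, Measure.smul_apply, smul_eq_mul, Measure.restrict_apply (hs l)]

lemma ennreal_arith (c : ENNReal) (hc0 : c ≠ 0) (hctop : c ≠ ⊤) (ν : ℕ) (hν : 1 ≤ ν) :
    c * (c⁻¹) ^ ν = (c ^ (ν - 1))⁻¹ := by
  obtain ⟨m, rfl⟩ : ∃ m, ν = m + 1 := ⟨ν - 1, (Nat.succ_pred_eq_of_pos hν).symm⟩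
  rw [Nat.add_sub_cancel, pow_succ, ← mul_assoc, mul_comm c (c⁻¹ ^ m), mul_assoc,
    ENNReal.mul_inv_cancel hc0 hctop, mul_one, ENNReal.inv_pow]

end ChainAux

open ChainAux

/-- If `X₁, …, X_k` are i.i.d. uniform points in the rectangle `[a,b] ⊆ ℝ^ν` (`a < b`
coordinatewise), the probability that they form an increasing chain in some order —
i.e. that some permutation arranges them strictly increasingly in every coordinate —
equals `(k!)^{−(ν−1)}`. -/
theorem prob_uniform_points_form_chain
    (ν k : ℕ) (hν : 2 ≤ ν) (hk : 1 ≤ k)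
    (a b : Fin ν → ℝ) (hab : ∀ i, a i < b i) :
    Measure.pi (fun _ : Fin k => uniformBox ν a b)
      {X : Fin k → Fin ν → ℝ | ∃ π : Equiv.Perm (Fin k),
        ∀ i j : Fin k, i < j → ∀ l : Fin ν, X (π i) l < X (π j) l} =
      (((k.factorial : ENNReal)) ^ (ν - 1))⁻¹ := by
  classical
  haveI : ∀ l, IsProbabilityMeasure (unif (a l) (b l)) := fun l => unif_prob (hab l)
  rw [uniformBox_eq a b hab]
  set Q : Measure (Fin ν → ℝ) := Measure.pi fun l => unif (a l) (b l) with hQ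
  set M : Measure (Fin k → Fin ν → ℝ) := Measure.pi fun _ : Fin k => Q with hM
  set B : Equiv.Perm (Fin k) → Set (Fin k → Fin ν → ℝ) :=
    fun π => {X | ∀ l : Fin ν, StrictMono fun i => X (π i) l} with hB
  have hE : {X : Fin k → Fin ν → ℝ | ∃ π : Equiv.Perm (Fin k),
      ∀ i j : Fin k, i < j → ∀ l : Fin ν, X (π i) l < X (π j) l} = ⋃ π, B π := by
    ext X
    simp only [Set.mem_setOf_eq, Set.mem_iUnion, hB]
    refine exists_congr fun π => ⟨fun h l i j hij => h i j hij l, fun h i j hij l => h l hij⟩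
  rw [hE]
  -- the set of strictly monotone tuples in ℝ
  have hSMmeas : MeasurableSet {y : Fin k → ℝ | StrictMono y} := by
    have : {y : Fin k → ℝ | StrictMono y}
        = ⋂ (c : Fin k), ⋂ (d : Fin k), ⋂ (_ : c < d), {y : Fin k → ℝ | y c < y d} := by
      ext y; simp [StrictMono, Set.mem_iInter]
    rw [this]
    exact MeasurableSet.iInter fun c => MeasurableSet.iInter fun d =>
      MeasurableSet.iInter fun _ => measurableSet_lt (measurable_pi_apply _) (measurable_pi_apply _)
  -- B 1 is the preimage of a product set under the transpose map
  have hB1pre : B 1 = (fun (X : Fin k → Fin ν → ℝ) (l : Fin ν) (i : Fin k) => X i l) ⁻¹'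
      (Set.pi Set.univ fun _ : Fin ν => {y : Fin k → ℝ | StrictMono y}) := by
    ext X
    simp only [hB, Set.mem_setOf_eq, Set.mem_preimage, Set.mem_pi, Set.mem_univ, true_implies]
    exact ⟨fun h l => h l, fun h l => h l⟩
  have hprodmeas : MeasurableSet
      (Set.pi Set.univ fun _ : Fin ν => {y : Fin k → ℝ | StrictMono y}) :=
    MeasurableSet.pi countable_univ fun _ _ => hSMmeas
  have hB1meas : MeasurableSet (B 1) := by
    rw [hB1pre]
    exact hprodmeas.preimage (measurable_pi_lambda _ fun l => measurable_pi_lambda _ fun i =>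
      (measurable_pi_apply l).comp (measurable_pi_apply i))
  -- each B π is the preimage of B 1 under a measure preserving permutation map
  have hBpre : ∀ π : Equiv.Perm (Fin k),
      B π = (fun (X : Fin k → Fin ν → ℝ) (i : Fin k) => X (π i)) ⁻¹' (B 1) := by
    intro π
    ext X
    simp only [hB, Set.mem_setOf_eq, Set.mem_preimage, Equiv.Perm.coe_one, id_eq]
  have hBmeas : ∀ π, MeasurableSet (B π) := by
    intro π
    rw [hBpre π]
    exact hB1meas.preimage (measurable_pi_lambda _ fun i => measurable_pi_apply _)
  have hBval : ∀ π, M (B π) = M (B 1) := by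
    intro π
    rw [hBpre π, hM]
    exact (mp_perm Q π).measure_preimage hB1meas.nullMeasurableSet
  -- disjointness
  have hdisj : Pairwise (Disjoint on B) := by
    intro π σ hne
    refine Set.disjoint_left.2 fun X hXπ hXσ => hne ?_
    have l0 : Fin ν := ⟨0, by omega⟩
    exact perm_unique (y := fun i => X i l0) (hXπ l0) (hXσ l0)
  -- value of M (B 1) via transposition
  have hchain : ∀ l : Fin ν,
      (Measure.pi fun _ : Fin k => unif (a l) (b l)) {y : Fin k → ℝ | StrictMono y}
        = ((k.factorial : ENNReal))⁻¹ := fun l => pi_strictMono_prob hk (unif (a l) (b l))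
  have hB1val : M (B 1) = (((k.factorial : ENNReal))⁻¹) ^ ν := by
    rw [hB1pre, hM, hQ]
    rw [(mp_transpose (fun l => unif (a l) (b l))).measure_preimage
      hprodmeas.nullMeasurableSet]
    rw [Measure.pi_pi]
    simp only [hchain]
    rw [Finset.prod_const, Finset.card_univ, Fintype.card_fin]
  -- sum up
  rw [measure_iUnion hdisj hBmeas, tsum_fintype]
  simp only [hBval]
  rw [Finset.sum_const, Finset.card_univ, Fintype.card_perm, Fintype.card_fin, nsmul_eq_mul,
    hB1val]
  -- arithmetic in ℝ≥0∞
  have hfac0 : (k.factorial : ENNReal) ≠ 0 := Nat.cast_ne_zero.2 k.factorial_ne_zero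
  have hfact : (k.factorial : ENNReal) ≠ ⊤ := ENNReal.natCast_ne_top _
  exact ennreal_arith _ hfac0 hfact ν (by omega)

end
end
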